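/- For every integer t ≥ 2, if G is a triangle-free K_{2,t}-free graph with diameter 2 and G is not a star graph, then the maximum degree Δ(G) satisfies Δ(G) ≤ (t-1)·((t-1)·δ(G) - t + 2) - t + 2, where δ(G) is the minimum degree. -/

import Mathlib

open SimpleGraph

/-- A graph has diameter 2: any two distinct vertices are adjacent or have a common
neighbour. -/
def DiamTwo {V : Type*} (G : SimpleGraph V) : Prop :=
  ∀ u v : V, u ≠ v → G.Adj u v ∨ ∃ w, G.Adj u w ∧ G.Adj w v

/-- `G` contains a subgraph isomorphic to the complete bipartite graph `K_{s,t}`. -/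
def HasKst {V : Type*} (s t : ℕ) (G : SimpleGraph V) : Prop :=
  ∃ f : completeBipartiteGraph (Fin s) (Fin t) →g G, Function.Injective f

lemma common_le {V : Type*} [Fintype V] [DecidableEq V] (G : SimpleGraph V)
    [DecidableRel G.Adj] (t : ℕ) (ht : 1 ≤ t) (hkst : ¬ HasKst 2 t G) {a b : V} (hab : a ≠ b) :
    ((G.neighborFinset a ∩ G.neighborFinset b).card : ℤ) ≤ (t : ℤ) - 1 := by
  by_contra hc
  push_neg at hc
  have htc : t ≤ (G.neighborFinset a ∩ G.neighborFinset b).card := by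
    have := hc; omega
  obtain ⟨s, hs, hsc⟩ := Finset.exists_subset_card_eq htc
  have e := (Finset.equivFinOfCardEq hsc).symm
  have hmem : ∀ i : Fin t, G.Adj a (e i) ∧ G.Adj b (e i) := by
    intro i
    have h1 : (e i : V) ∈ s := (e i).2
    have h2 := hs h1
    simp only [Finset.mem_inter, mem_neighborFinset] at h2
    exact h2
  have h2 : ∀ i : Fin 2, i = 0 ∨ i = 1 := by decide
  set g : Fin 2 → V := fun i => if i = 0 then a else b with hg
  have hga : g 0 = a := rfl
  have hgb : g 1 = b := rfl
  apply hkst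
  set F : (Fin 2 ⊕ Fin t) → V := Sum.elim g (fun i => (e i : V)) with hF
  have hFinj : Function.Injective F := by
      have hne : ∀ (i : Fin 2) (j : Fin t), g i ≠ (e j : V) := by
        intro i j
        rcases h2 i with hi | hi <;> subst hi
        · simpa [hga] using (hmem j).1.ne
        · simpa [hgb] using (hmem j).2.ne
      rintro (i | i) (j | j) h <;>
        simp only [hF, Sum.elim_inl, Sum.elim_inr] at h
      · rcases h2 i with hi | hi <;> rcases h2 j with hj | hj <;> subst hi <;> subst hj <;>
          first
            | rfl
            | (exact absurd (by simpa [hga, hgb] using h) hab)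
            | (exact absurd (by simpa [hga, hgb] using h.symm) hab)
      · exact absurd h (hne i j)
      · exact absurd h.symm (hne j i)
      · exact congrArg Sum.inr (e.injective (Subtype.ext h))
  refine ⟨⟨F, ?_⟩, hFinj⟩
  · rintro (i | i) (j | j) hadj <;>
      simp only [completeBipartiteGraph, Sum.isLeft_inl, Sum.isRight_inl, Sum.isLeft_inr,
        Sum.isRight_inr, and_true, true_and, and_false, false_and, or_false, false_or] at hadj
    · exact absurd hadj (by simp)
    · rcases h2 i with hi | hi <;> subst hi
      · simpa [hF, hga] using (hmem j).1
      · simpa [hF, hgb] using (hmem j).2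
    · rcases h2 j with hj | hj <;> subst hj
      · simpa [hF, hga] using (hmem i).1.symm
      · simpa [hF, hgb] using (hmem i).2.symm
    · exact absurd hadj (by simp)

lemma key_lemma {V : Type*} [Fintype V] [DecidableEq V] (G : SimpleGraph V)
    [DecidableRel G.Adj] (t : ℕ) (ht : 2 ≤ t)
    (htf : G.CliqueFree 3) (hkst : ¬ HasKst 2 t G) (hdiam : DiamTwo G)
    {u v : V} (huv : u ≠ v) (hadj : ¬ G.Adj u v) :
    (G.degree v : ℤ) ≤ ((t : ℤ) - 1) * G.degree u - t + 2 := by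
  have ht1 : 1 ≤ t := by omega
  classical
  set A : Finset V := G.neighborFinset v ∩ G.neighborFinset u with hA
  set B : Finset V := G.neighborFinset v \ G.neighborFinset u with hB
  set C : Finset V := G.neighborFinset u \ G.neighborFinset v with hC
  -- A is nonempty
  have hA1 : 1 ≤ A.card := by
    rcases hdiam u v huv with h | ⟨w, hw1, hw2⟩
    · exact absurd h hadj
    · refine Finset.card_pos.2 ⟨w, ?_⟩
      simp [hA, mem_neighborFinset, hw2.symm, hw1]
  have hAt : (A.card : ℤ) ≤ (t : ℤ) - 1 := by
    have := common_le G t ht1 hkst (a := v) (b := u) (Ne.symm huv)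
    simpa [hA] using this
  -- B covered by common neighborhoods
  have hBsub : B ⊆ C.biUnion (fun w => G.neighborFinset w ∩ G.neighborFinset v) := by
    intro x hx
    simp only [hB, Finset.mem_sdiff, mem_neighborFinset] at hx
    obtain ⟨hvx, hux⟩ := hx
    have hxu : u ≠ x := by rintro rfl; exact hadj hvx.symm
    rcases hdiam u x hxu with h | ⟨w, hw1, hw2⟩
    · exact absurd h hux
    · have hwv : w ∉ G.neighborFinset v := by
        intro hwv
        rw [mem_neighborFinset] at hwv
        exact htf {v, w, x} (is3Clique_triple_iff.2 ⟨hwv, hvx, hw2⟩)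
      refine Finset.mem_biUnion.2 ⟨w, ?_, ?_⟩
      · simp [hC, mem_neighborFinset, hw1, hwv]
      · simp [mem_neighborFinset, hw2, hvx]
  have hBle : (B.card : ℤ) ≤ (C.card : ℤ) * ((t : ℤ) - 1) := by
    have h1 : B.card ≤ ∑ w ∈ C, (G.neighborFinset w ∩ G.neighborFinset v).card :=
      le_trans (Finset.card_le_card hBsub) (Finset.card_biUnion_le)
    have h2 : ((∑ w ∈ C, (G.neighborFinset w ∩ G.neighborFinset v).card : ℕ) : ℤ)
        ≤ (C.card : ℤ) * ((t : ℤ) - 1) := by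
      push_cast
      calc (∑ w ∈ C, ((G.neighborFinset w ∩ G.neighborFinset v).card : ℤ))
          ≤ ∑ w ∈ C, ((t : ℤ) - 1) := by
            refine Finset.sum_le_sum ?_
            intro w hw
            have hwv : w ≠ v := by
              rintro rfl
              simp only [hC, Finset.mem_sdiff, mem_neighborFinset] at hw
              exact hadj hw.1
            exact common_le G t ht1 hkst hwv
        _ = (C.card : ℤ) * ((t : ℤ) - 1) := by
            rw [Finset.sum_const, nsmul_eq_mul]
    exact le_trans (by exact_mod_cast h1) h2
  have hdv : (G.degree v : ℤ) = (B.card : ℤ) + (A.card : ℤ) := by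
    have := Finset.card_sdiff_add_card_inter (G.neighborFinset v) (G.neighborFinset u)
    rw [SimpleGraph.degree]
    push_cast [← this]
    simp [hA, hB]
  have hdu : (G.degree u : ℤ) = (C.card : ℤ) + (A.card : ℤ) := by
    have := Finset.card_sdiff_add_card_inter (G.neighborFinset u) (G.neighborFinset v)
    rw [SimpleGraph.degree]
    push_cast [← this]
    simp [hA, hC, Finset.inter_comm]
  have htz : (2 : ℤ) ≤ (t : ℤ) := by exact_mod_cast ht
  have hA1' : (1 : ℤ) ≤ (A.card : ℤ) := by exact_mod_cast hA1
  nlinarith [hBle, hdv, hdu, hA1', hAt, htz]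

/-- For `t ≥ 2`, a triangle-free `K_{2,t}`-free diameter-2 graph which is not a star
satisfies `Δ(G) ≤ (t-1)((t-1)δ(G) - t + 2) - t + 2`.  (A triangle-free graph is a star
iff it has a dominating vertex.) -/
theorem stmt3 {V : Type*} [Fintype V] [Nonempty V] (G : SimpleGraph V)
    [DecidableRel G.Adj] (t : ℕ) (ht : 2 ≤ t)
    (htf : G.CliqueFree 3) (hkst : ¬ HasKst 2 t G) (hdiam : DiamTwo G)
    (hstar : ¬ ∃ v : V, ∀ w : V, w ≠ v → G.Adj v w) :
    (G.maxDegree : ℤ) ≤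
      ((t : ℤ) - 1) * (((t : ℤ) - 1) * G.minDegree - t + 2) - t + 2 := by
  classical
  have ht1 : 1 ≤ t := by omega
  have htz : (2 : ℤ) ≤ (t : ℤ) := by exact_mod_cast ht
  have hdom : ∀ v : V, ∃ w, w ≠ v ∧ ¬ G.Adj v w := by
    intro v
    by_contra h
    push_neg at h
    exact hstar ⟨v, h⟩
  obtain ⟨u0, hu0⟩ := G.exists_minimal_degree_vertex
  obtain ⟨v, hv⟩ := G.exists_maximal_degree_vertex
  set δ : ℤ := (G.minDegree : ℤ) with hδ
  have hδu0 : (G.degree u0 : ℤ) = δ := by rw [hδ, hu0]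
  -- minimum degree at least 2
  have hdeg2 : 2 ≤ G.degree u0 := by
    obtain ⟨w, hw_ne, hw_nadj⟩ := hdom u0
    obtain ⟨p, hp⟩ : ∃ p, G.Adj u0 p := by
      rcases hdiam u0 w (Ne.symm hw_ne) with h | ⟨c, hc1, _⟩
      · exact ⟨w, h⟩
      · exact ⟨c, hc1⟩
    by_contra hlt
    push_neg at hlt
    have hmem_p : p ∈ G.neighborFinset u0 := (mem_neighborFinset _ _ _).2 hp
    have hsingle : ∀ q ∈ G.neighborFinset u0, q = p := by
      intro q hq
      by_contra hqp
      have h2 : 1 < (G.neighborFinset u0).card := Finset.one_lt_card.2 ⟨q, hq, p, hmem_p, hqp⟩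
      have : G.degree u0 = (G.neighborFinset u0).card := rfl
      omega
    apply hstar
    refine ⟨p, fun w' hw' => ?_⟩
    by_cases hwu : w' = u0
    · subst hwu; exact hp.symm
    · rcases hdiam u0 w' (Ne.symm hwu) with h | ⟨c, hc1, hc2⟩
      · exact absurd (hsingle w' ((mem_neighborFinset _ _ _).2 h)) hw'
      · have hcp := hsingle c ((mem_neighborFinset _ _ _).2 hc1)
        subst hcp
        exact hc2
  have hδ2 : (2 : ℤ) ≤ δ := by rw [← hδu0]; exact_mod_cast hdeg2
  set Y : ℤ := ((t : ℤ) - 1) * δ - t + 2 with hY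
  have hYT : (t : ℤ) ≤ Y := by nlinarith
  have hbound : ∀ w : V, w ≠ u0 → ¬ G.Adj u0 w → (G.degree w : ℤ) ≤ Y := by
    intro w hw hnadj
    have h := key_lemma G t ht htf hkst hdiam (Ne.symm hw) hnadj
    rw [hδu0] at h
    linarith
  rw [hv]
  by_cases hvu : v = u0
  · -- v = u0 : degree v = δ
    rw [hvu, hδu0]
    nlinarith
  -- main reduction: find d non-adjacent to v with degree ≤ Y
  have main : ∀ d : V, d ≠ v → ¬ G.Adj v d → (G.degree d : ℤ) ≤ Y →
      (G.degree v : ℤ) ≤ ((t : ℤ) - 1) * (((t : ℤ) - 1) * (G.minDegree : ℤ) - t + 2) - t + 2 := by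
    intro d h1 h2 h3
    have h := key_lemma G t ht htf hkst hdiam h1 (fun h => h2 h.symm)
    have : ((t : ℤ) - 1) * (((t : ℤ) - 1) * (G.minDegree : ℤ) - t + 2) - t + 2
        = ((t : ℤ) - 1) * Y - t + 2 := by rw [hY, hδ]
    rw [this]
    nlinarith
  by_cases hadjvu : G.Adj v u0
  · by_cases hex : ∃ z, z ≠ v ∧ ¬ G.Adj v z ∧ ¬ G.Adj u0 z ∧ z ≠ u0
    · obtain ⟨z, h1, h2, h3, h4⟩ := hex
      exact main z h1 h2 (hbound z h4 h3)
    · push_neg at hex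
      have hall : ∀ z, z ≠ v → ¬ G.Adj v z → G.Adj u0 z := by
        intro z h1 h2
        by_contra h3
        exact h2 (hex z h1 h2 h3 ▸ hadjvu)
      obtain ⟨x', hx'_mem, hx'_ne⟩ :=
        Finset.exists_mem_ne (s := G.neighborFinset u0)
          (by have : G.degree u0 = (G.neighborFinset u0).card := rfl; omega) v
      have hx'adj : G.Adj u0 x' := (mem_neighborFinset _ _ _).1 hx'_mem
      have hx'v : ¬ G.Adj v x' := by
        intro h
        exact htf {v, u0, x'} (is3Clique_triple_iff.2 ⟨hadjvu, h, hx'adj⟩)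
      refine main x' hx'_ne hx'v ?_
      -- degree x' ≤ t ≤ Y
      have hsub : G.neighborFinset x' ⊆
          insert u0 (G.neighborFinset x' ∩ G.neighborFinset v) := by
        intro y hy
        by_cases hyu : y = u0
        · simp [hyu]
        · have hyadj : G.Adj x' y := (mem_neighborFinset _ _ _).1 hy
          have hyv : y ≠ v := by rintro rfl; exact hx'v hyadj.symm
          have hvy : G.Adj v y := by
            by_contra hvy
            exact htf {u0, x', y}
              (is3Clique_triple_iff.2 ⟨hx'adj, hall y hyv hvy, hyadj⟩)
          simp [Finset.mem_insert, mem_neighborFinset, hyadj, hvy]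
      have hcard : (G.degree x' : ℤ)
          ≤ ((G.neighborFinset x' ∩ G.neighborFinset v).card : ℤ) + 1 := by
        have h1 : G.degree x' = (G.neighborFinset x').card := rfl
        have h2 := Finset.card_le_card hsub
        have h3 := Finset.card_insert_le u0 (G.neighborFinset x' ∩ G.neighborFinset v)
        rw [h1]
        exact_mod_cast le_trans h2 h3
      have hcle := common_le G t ht1 hkst (a := x') (b := v) hx'_ne
      linarith
  · refine main u0 (fun h => hvu h.symm) hadjvu ?_
    rw [hδu0]
    nlinarith
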